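/- For a real number x with 0 ≤ x < 1 and any positive integer n, the quadruple sum ∑_{i,j,k,l=1}^{n} x^{i+j+k+l - 4·min(i,j,k,l)} is at most (24/((1-x)(1-x²)(1-x³)))·n. -/

import Mathlib

private lemma sum_ite_le (x : ℝ) (hx0 : 0 ≤ x) (hx1 : x < 1) (n i : ℕ) :
    ∑ j ∈ Finset.Icc 1 n, (if i ≤ j then x ^ (j - i) else 0) ≤ 1 / (1 - x) := by
  have h1 : (0:ℝ) < 1 - x := by linarith
  calc ∑ j ∈ Finset.Icc 1 n, (if i ≤ j then x ^ (j - i) else 0)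
      = ∑ j ∈ (Finset.Icc 1 n).filter (fun j => i ≤ j), x ^ (j - i) :=
        (Finset.sum_filter _ _).symm
    _ = ∑ t ∈ ((Finset.Icc 1 n).filter (fun j => i ≤ j)).image (fun j => j - i), x ^ t := by
        rw [Finset.sum_image]
        intro a ha b hb hab
        simp only [Finset.mem_coe, Finset.mem_filter, Finset.mem_Icc] at ha hb
        beta_reduce at hab
        omega
    _ ≤ ∑ t ∈ Finset.range (n+1), x ^ t := by
        apply Finset.sum_le_sum_of_subset_of_nonneg
        · intro t ht
          simp only [Finset.mem_image, Finset.mem_filter, Finset.mem_Icc] at ht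
          simp only [Finset.mem_range]
          omega
        · intros
          positivity
    _ = (x ^ (n+1) - 1) / (x - 1) := geom_sum_eq (by linarith) _
    _ = (1 - x ^ (n+1)) / (1 - x) := by
        rw [div_eq_div_iff (by linarith) (by linarith)]
        ring
    _ ≤ 1 / (1 - x) := by
        gcongr
        have : (0:ℝ) ≤ x ^ (n+1) := by positivity
        linarith

private lemma comm3 (s t u : Finset ℕ) (f : ℕ → ℕ → ℕ → ℝ) :
    ∑ i ∈ s, ∑ j ∈ t, ∑ k ∈ u, f i j k = ∑ k ∈ u, ∑ i ∈ s, ∑ j ∈ t, f i j k := by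
  calc ∑ i ∈ s, ∑ j ∈ t, ∑ k ∈ u, f i j k
      = ∑ i ∈ s, ∑ k ∈ u, ∑ j ∈ t, f i j k :=
        Finset.sum_congr rfl fun _ _ => Finset.sum_comm
    _ = ∑ k ∈ u, ∑ i ∈ s, ∑ j ∈ t, f i j k := Finset.sum_comm

private lemma comm4 (s t u v : Finset ℕ) (f : ℕ → ℕ → ℕ → ℕ → ℝ) :
    ∑ i ∈ s, ∑ j ∈ t, ∑ k ∈ u, ∑ l ∈ v, f i j k l
      = ∑ l ∈ v, ∑ i ∈ s, ∑ j ∈ t, ∑ k ∈ u, f i j k l := by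
  calc ∑ i ∈ s, ∑ j ∈ t, ∑ k ∈ u, ∑ l ∈ v, f i j k l
      = ∑ i ∈ s, ∑ l ∈ v, ∑ j ∈ t, ∑ k ∈ u, f i j k l :=
        Finset.sum_congr rfl fun i _ => comm3 t u v (f i)
    _ = ∑ l ∈ v, ∑ i ∈ s, ∑ j ∈ t, ∑ k ∈ u, f i j k l := Finset.sum_comm

private lemma quad_sum (s : Finset ℕ) (P : ℕ → ℕ → ℝ) :
    ∑ a ∈ s, ∑ b ∈ s, ∑ c ∈ s, ∑ d ∈ s, P a b * P a c * P a d
      = ∑ a ∈ s, (∑ b ∈ s, P a b) ^ 3 := by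
  refine Finset.sum_congr rfl fun a _ => ?_
  rw [pow_succ, sq, Finset.sum_mul_sum, Finset.sum_mul]
  refine Finset.sum_congr rfl fun b _ => ?_
  rw [Finset.sum_mul]
  refine Finset.sum_congr rfl fun c _ => ?_
  rw [Finset.mul_sum]

theorem stmt1 (x : ℝ) (hx0 : 0 ≤ x) (hx1 : x < 1) (n : ℕ) (hn : 0 < n) :
    ∑ i ∈ Finset.Icc 1 n, ∑ j ∈ Finset.Icc 1 n, ∑ k ∈ Finset.Icc 1 n, ∑ l ∈ Finset.Icc 1 n,
        x ^ (i + j + k + l - 4 * min (min i j) (min k l))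
      ≤ (24 / ((1 - x) * (1 - x ^ 2) * (1 - x ^ 3))) * n := by
  have h1 : (0:ℝ) < 1 - x := by linarith
  set P : ℕ → ℕ → ℝ := fun a b => if a ≤ b then x ^ (b - a) else 0 with hP
  have hPnn : ∀ a b, 0 ≤ P a b := by
    intro a b
    simp only [hP]
    split
    · positivity
    · exact le_refl 0
  have hA : ∀ a, ∑ b ∈ Finset.Icc 1 n, P a b ≤ 1 / (1 - x) := fun a =>
    sum_ite_le x hx0 hx1 n a
  have hAnn : ∀ a, 0 ≤ ∑ b ∈ Finset.Icc 1 n, P a b := fun a =>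
    Finset.sum_nonneg fun b _ => hPnn a b
  have hnn4 : ∀ a b c d : ℕ, 0 ≤ P a b * P a c * P a d := fun a b c d =>
    mul_nonneg (mul_nonneg (hPnn a b) (hPnn a c)) (hPnn a d)
  have heq : ∀ a b c d e : ℕ, a ≤ b → a ≤ c → a ≤ d →
      e = (b - a) + ((c - a) + (d - a)) →
      x ^ e = P a b * P a c * P a d := by
    intro a b c d e hab hac had he
    simp only [hP, if_pos hab, if_pos hac, if_pos had, ← pow_add, he]
    ring
  have key : ∀ i j k l : ℕ,
      x ^ (i + j + k + l - 4 * min (min i j) (min k l))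
        ≤ P i j * P i k * P i l + P j i * P j k * P j l
          + P k i * P k j * P k l + P l i * P l j * P l k := by
    intro i j k l
    rcases show min (min i j) (min k l) = i ∨ min (min i j) (min k l) = j ∨
        min (min i j) (min k l) = k ∨ min (min i j) (min k l) = l by omega with h | h | h | h
    · have he : x ^ (i + j + k + l - 4 * min (min i j) (min k l))
          = P i j * P i k * P i l :=
        heq i j k l _ (by omega) (by omega) (by omega) (by omega)
      rw [he]
      linarith [hnn4 j i k l, hnn4 k i j l, hnn4 l i j k]
    · have he : x ^ (i + j + k + l - 4 * min (min i j) (min k l))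
          = P j i * P j k * P j l :=
        heq j i k l _ (by omega) (by omega) (by omega) (by omega)
      rw [he]
      linarith [hnn4 i j k l, hnn4 k i j l, hnn4 l i j k]
    · have he : x ^ (i + j + k + l - 4 * min (min i j) (min k l))
          = P k i * P k j * P k l :=
        heq k i j l _ (by omega) (by omega) (by omega) (by omega)
      rw [he]
      linarith [hnn4 i j k l, hnn4 j i k l, hnn4 l i j k]
    · have he : x ^ (i + j + k + l - 4 * min (min i j) (min k l))
          = P l i * P l j * P l k :=
        heq l i j k _ (by omega) (by omega) (by omega) (by omega)
      rw [he]
      linarith [hnn4 i j k l, hnn4 j i k l, hnn4 k i j l]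
  set s := Finset.Icc 1 n with hs
  have step1 : ∑ i ∈ s, ∑ j ∈ s, ∑ k ∈ s, ∑ l ∈ s,
      x ^ (i + j + k + l - 4 * min (min i j) (min k l))
      ≤ ∑ i ∈ s, ∑ j ∈ s, ∑ k ∈ s, ∑ l ∈ s,
        (P i j * P i k * P i l + P j i * P j k * P j l
          + P k i * P k j * P k l + P l i * P l j * P l k) :=
    Finset.sum_le_sum fun i _ => Finset.sum_le_sum fun j _ =>
      Finset.sum_le_sum fun k _ => Finset.sum_le_sum fun l _ => key i j k l
  have split : ∑ i ∈ s, ∑ j ∈ s, ∑ k ∈ s, ∑ l ∈ s,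
        (P i j * P i k * P i l + P j i * P j k * P j l
          + P k i * P k j * P k l + P l i * P l j * P l k)
      = (∑ i ∈ s, ∑ j ∈ s, ∑ k ∈ s, ∑ l ∈ s, P i j * P i k * P i l)
        + (∑ i ∈ s, ∑ j ∈ s, ∑ k ∈ s, ∑ l ∈ s, P j i * P j k * P j l)
        + (∑ i ∈ s, ∑ j ∈ s, ∑ k ∈ s, ∑ l ∈ s, P k i * P k j * P k l)
        + (∑ i ∈ s, ∑ j ∈ s, ∑ k ∈ s, ∑ l ∈ s, P l i * P l j * P l k) := by
    simp only [Finset.sum_add_distrib]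
  have hT1 : ∑ i ∈ s, ∑ j ∈ s, ∑ k ∈ s, ∑ l ∈ s, P i j * P i k * P i l
      = ∑ a ∈ s, (∑ b ∈ s, P a b) ^ 3 := quad_sum s P
  have hT2 : ∑ i ∈ s, ∑ j ∈ s, ∑ k ∈ s, ∑ l ∈ s, P j i * P j k * P j l
      = ∑ a ∈ s, (∑ b ∈ s, P a b) ^ 3 := by
    rw [Finset.sum_comm]
    exact quad_sum s P
  have hT3 : ∑ i ∈ s, ∑ j ∈ s, ∑ k ∈ s, ∑ l ∈ s, P k i * P k j * P k l
      = ∑ a ∈ s, (∑ b ∈ s, P a b) ^ 3 := by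
    rw [comm3 s s s (fun i j k => ∑ l ∈ s, P k i * P k j * P k l)]
    exact quad_sum s P
  have hT4 : ∑ i ∈ s, ∑ j ∈ s, ∑ k ∈ s, ∑ l ∈ s, P l i * P l j * P l k
      = ∑ a ∈ s, (∑ b ∈ s, P a b) ^ 3 := by
    rw [comm4 s s s s (fun i j k l => P l i * P l j * P l k)]
    exact quad_sum s P
  have hcube : ∑ a ∈ s, (∑ b ∈ s, P a b) ^ 3 ≤ n * (1 / (1 - x)) ^ 3 := by
    calc ∑ a ∈ s, (∑ b ∈ s, P a b) ^ 3
        ≤ ∑ _a ∈ s, (1 / (1 - x)) ^ 3 :=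
          Finset.sum_le_sum fun a _ => pow_le_pow_left₀ (hAnn a) (hA a) 3
      _ = (n : ℝ) * (1 / (1 - x)) ^ 3 := by
          rw [Finset.sum_const, hs, Nat.card_Icc]
          simp [nsmul_eq_mul]
  have h2 : (0:ℝ) < 1 - x ^ 2 := by nlinarith
  have h3 : (0:ℝ) < 1 - x ^ 3 := by nlinarith
  have hD : (0:ℝ) < (1 - x) * (1 - x ^ 2) * (1 - x ^ 3) := by positivity
  have hcoef : 4 * (1 / (1 - x)) ^ 3 ≤ 24 / ((1 - x) * (1 - x ^ 2) * (1 - x ^ 3)) := by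
    have e : 4 * (1 / (1 - x)) ^ 3 = 4 / (1 - x) ^ 3 := by
      field_simp
    rw [e, div_le_div_iff₀ (by positivity) hD]
    nlinarith [sq_nonneg x, sq_nonneg (1 - x), pow_pos h1 3, mul_pos (mul_pos h1 h2) h3]
  calc ∑ i ∈ s, ∑ j ∈ s, ∑ k ∈ s, ∑ l ∈ s,
        x ^ (i + j + k + l - 4 * min (min i j) (min k l))
      ≤ (∑ i ∈ s, ∑ j ∈ s, ∑ k ∈ s, ∑ l ∈ s, P i j * P i k * P i l)
        + (∑ i ∈ s, ∑ j ∈ s, ∑ k ∈ s, ∑ l ∈ s, P j i * P j k * P j l)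
        + (∑ i ∈ s, ∑ j ∈ s, ∑ k ∈ s, ∑ l ∈ s, P k i * P k j * P k l)
        + (∑ i ∈ s, ∑ j ∈ s, ∑ k ∈ s, ∑ l ∈ s, P l i * P l j * P l k) := by
        rw [← split]; exact step1
    _ = 4 * ∑ a ∈ s, (∑ b ∈ s, P a b) ^ 3 := by
        rw [hT1, hT2, hT3, hT4]; ring
    _ ≤ 4 * ((n : ℝ) * (1 / (1 - x)) ^ 3) := by linarith
    _ = (4 * (1 / (1 - x)) ^ 3) * n := by ring
    _ ≤ (24 / ((1 - x) * (1 - x ^ 2) * (1 - x ^ 3))) * n :=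
        mul_le_mul_of_nonneg_right hcoef (Nat.cast_nonneg n)
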